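/- Let R be a finite commutative halidon ring with index m and let G be a cyclic group of order m. Then the number of units of the group ring RG equals the number of units of R raised to the power |G| = m; that is, |U(RG)| = |U(R)|^m. -/

import Mathlib

def IsPrimitiveHalidonRoot {R : Type*} [CommRing R] (m : ℕ) (ω : R) : Prop :=
  ω ^ m = 1 ∧ (∀ k : ℕ, 0 < k → k < m → ω ^ k ≠ 1) ∧
    ∀ k : ℕ, 0 < k → k < m → ∑ r ∈ Finset.range m, ω ^ (r * k) = 0

def IsHalidonRing (R : Type*) [CommRing R] (m : ℕ) : Prop :=
  IsUnit (m : R) ∧ ∃ ω : R, IsPrimitiveHalidonRoot m ω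

/-- Units of a pi type. -/
def piUnitsEquiv {ι : Type*} (M : ι → Type*) [∀ i, Monoid (M i)] :
    (∀ i, M i)ˣ ≃* ∀ i, (M i)ˣ where
  toFun u i := ⟨u.val i, u.inv i, congrFun u.val_inv i, congrFun u.inv_val i⟩
  invFun u := ⟨fun i => (u i).val, fun i => (u i).inv,
    funext fun i => (u i).val_inv, funext fun i => (u i).inv_val⟩
  left_inv u := by ext; rfl
  right_inv u := rfl
  map_mul' u v := rfl

/-- If `R` is a finite commutative halidon ring with index `m` and `G` is a cyclic
group of order `m`, then the group ring `RG` has `|U(R)|^m` units. -/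
theorem card_units_groupRing {R G : Type*} [CommRing R] [Fintype R] [Group G] [Fintype G]
    (m : ℕ) (hm : 0 < m) (hR : IsHalidonRing R m)
    (hG : IsCyclic G) (hcard : Fintype.card G = m) :
    Nat.card (MonoidAlgebra R G)ˣ = Nat.card Rˣ ^ m := by
  classical
  have hcard' : Nat.card G = m := by rw [Nat.card_eq_fintype_card, hcard]
  subst hcard'
  set m := Nat.card G with hmdef
  obtain ⟨hmu, ω, hω1, hω2, hω3⟩ := hR
  haveI : NeZero m := ⟨hm.ne'⟩
  have hpowmod : ∀ n : ℕ, ω ^ (n % m) = ω ^ n := by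
    intro n
    conv_rhs => rw [← Nat.mod_add_div n m]
    rw [pow_add, pow_mul, hω1, one_pow, mul_one]
  have hval : ∀ x y : ZMod m, ω ^ (x + y).val = ω ^ x.val * ω ^ y.val := by
    intro x y; rw [ZMod.val_add, hpowmod, pow_add]
  have hvalmul : ∀ x y : ZMod m, ω ^ (x * y).val = ω ^ (x.val * y.val) := by
    intro x y; rw [ZMod.val_mul, hpowmod]
  -- orthogonality relations
  have horth : ∀ k : ZMod m, ∑ j : ZMod m, ω ^ (k * j).val
      = if k = 0 then (m : R) else 0 := by
    intro k
    have hsum : ∑ j : ZMod m, ω ^ (k * j).val = ∑ r ∈ Finset.range m, ω ^ (k.val * r) := by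
      refine Finset.sum_nbij' (fun j => j.val) (fun r => (r : ZMod m)) ?_ ?_ ?_ ?_ ?_
      · intro j _; exact Finset.mem_range.2 (ZMod.val_lt j)
      · intro r _; exact Finset.mem_univ _
      · intro j _; exact ZMod.natCast_rightInverse j
      · intro r hr; exact ZMod.val_cast_of_lt (Finset.mem_range.1 hr)
      · intro j _; rw [hvalmul]
    rw [hsum]
    by_cases hk : k = 0
    · simp [hk, ZMod.val_zero]
    · rw [if_neg hk]
      have h1 : 0 < k.val := Nat.pos_of_ne_zero (fun h => hk (by
        rwa [ZMod.val_eq_zero] at h))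
      have h2 : k.val < m := ZMod.val_lt k
      have := hω3 k.val h1 h2
      simpa [mul_comm] using this
  set G' := Multiplicative (ZMod m) with hG'
  -- characters
  let χ : ZMod m → G' →* R := fun j =>
    { toFun := fun i => ω ^ (i.toAdd * j).val
      map_one' := by simp
      map_mul' := fun a b => by
        show ω ^ ((a.toAdd + b.toAdd) * j).val = _
        rw [add_mul, hval] }
  let Φ : MonoidAlgebra R G' →+* (ZMod m → R) :=
    Pi.ringHom fun j => ((MonoidAlgebra.lift R R G') (χ j)).toRingHom
  have hΦapply : ∀ (f : MonoidAlgebra R G') (j : ZMod m),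
      Φ f j = ∑ i : G', f.coeff i * ω ^ (i.toAdd * j).val := by
    intro f j
    show (MonoidAlgebra.lift R R G') (χ j) f = _
    rw [MonoidAlgebra.lift_apply, Finsupp.sum_fintype]
    · rfl
    · intro i; simp
  -- injectivity of the Fourier transform
  have hinj : Function.Injective Φ := by
    rw [injective_iff_map_eq_zero]
    intro f hf
    refine MonoidAlgebra.coeff_injective (Finsupp.ext fun i₀ => ?_)
    have h0 : ∀ j, Φ f j = 0 := fun j => congrFun hf j
    have key : (0 : R) = f.coeff i₀ * m := by
      calc (0 : R) = ∑ j : ZMod m, Φ f j * ω ^ ((-i₀.toAdd) * j).val := by simp [h0]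
        _ = ∑ j : ZMod m, ∑ i : G',
              f.coeff i * (ω ^ (i.toAdd * j).val * ω ^ ((-i₀.toAdd) * j).val) := by
            refine Finset.sum_congr rfl fun j _ => ?_
            rw [hΦapply, Finset.sum_mul]
            exact Finset.sum_congr rfl fun i _ => by ring
        _ = ∑ i : G', f.coeff i * ∑ j : ZMod m, ω ^ ((i.toAdd + -i₀.toAdd) * j).val := by
            rw [Finset.sum_comm]
            refine Finset.sum_congr rfl fun i _ => ?_
            rw [Finset.mul_sum]
            refine Finset.sum_congr rfl fun j _ => ?_
            rw [add_mul, hval]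
        _ = ∑ i : G', f.coeff i * (if i.toAdd + -i₀.toAdd = 0 then (m : R) else 0) := by
            refine Finset.sum_congr rfl fun i _ => ?_
            rw [horth]
        _ = ∑ i : G', if i = i₀ then f.coeff i * (m : R) else 0 := by
            refine Finset.sum_congr rfl fun i _ => ?_
            by_cases h : i = i₀
            · simp [h]
            · have h' : i.toAdd + -i₀.toAdd ≠ 0 := by
                have : i.toAdd - i₀.toAdd ≠ 0 :=
                  sub_ne_zero.2 fun hc => h (Multiplicative.toAdd.injective hc)
                simpa [sub_eq_add_neg] using this
              simp [h, h']
        _ = f.coeff i₀ * m := by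
            rw [Finset.sum_ite_eq' Finset.univ i₀ (fun i => f.coeff i * (m : R))]
            simp
    obtain ⟨u, hu⟩ := hmu
    have : f.coeff i₀ = f.coeff i₀ * (m : R) * ↑u⁻¹ := by
      rw [← hu, mul_assoc, Units.mul_inv, mul_one]
    rw [this, ← key, zero_mul]
    rfl
  -- bijectivity via cardinality
  haveI : Fintype G' := inferInstanceAs (Fintype (Multiplicative (ZMod m)))
  haveI : Fintype (MonoidAlgebra R G') := Fintype.ofEquiv _ MonoidAlgebra.coeffEquiv.symm
  have hbij : Function.Bijective Φ := by
    rw [Fintype.bijective_iff_injective_and_card]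
    refine ⟨hinj, Fintype.card_congr ?_⟩
    exact MonoidAlgebra.coeffEquiv.trans <| (Finsupp.equivFunOnFinite).trans (Equiv.arrowCongr Multiplicative.toAdd (Equiv.refl R))
  let Φe : MonoidAlgebra R G' ≃+* (ZMod m → R) := RingEquiv.ofBijective Φ hbij
  -- identify G with G'
  have e : G' ≃* G := zmodCyclicMulEquiv hG
  let κ : MonoidAlgebra R G ≃+* MonoidAlgebra R G' :=
    (MonoidAlgebra.domCongr R R e.symm).toRingEquiv
  calc Nat.card (MonoidAlgebra R G)ˣ
      = Nat.card (MonoidAlgebra R G')ˣ := Nat.card_congr (Units.mapEquiv κ.toMulEquiv).toEquiv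
    _ = Nat.card ((ZMod m → R))ˣ := Nat.card_congr (Units.mapEquiv Φe.toMulEquiv).toEquiv
    _ = Nat.card (∀ _ : ZMod m, Rˣ) := Nat.card_congr (piUnitsEquiv fun _ => R).toEquiv
    _ = Nat.card Rˣ ^ m := by
        rw [Nat.card_pi, Finset.prod_const, Finset.card_univ, ZMod.card]
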